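/- Let V : ℕ → ℝ with V(k) ≥ 0 for all k, let e : ℕ → ℝⁿ, and let c > 0, b ≥ 0 be real numbers such that V(k+1) ≤ V(k) − c·‖e(k)‖² + b for every k ∈ ℕ. Then for every real r > 0 with c·r² > b, there exists k ∈ ℕ with k ≤ V(0)/(c·r² − b) such that ‖e(k)‖ ≤ r. -/

import Mathlib

/-- finite-time convergence from a Lyapunov decrease inequality:
if `V ≥ 0` and `V(k+1) ≤ V(k) − c‖e(k)‖² + b`, then for any `r > 0` with
`c·r² > b` there is `k ≤ V(0)/(c·r² − b)` with `‖e(k)‖ ≤ r`. -/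
theorem stmt_13 (n : ℕ) (V : ℕ → ℝ) (hV : ∀ k : ℕ, 0 ≤ V k)
    (e : ℕ → EuclideanSpace ℝ (Fin n)) (c b : ℝ) (hc : 0 < c) (hb : 0 ≤ b)
    (h : ∀ k : ℕ, V (k + 1) ≤ V k - c * ‖e k‖ ^ 2 + b) :
    ∀ r : ℝ, 0 < r → b < c * r ^ 2 →
      ∃ k : ℕ, (k : ℝ) ≤ V 0 / (c * r ^ 2 - b) ∧ ‖e k‖ ≤ r := by
  intro r hr hrb
  set δ := c * r ^ 2 - b with hδdef
  have hδ : 0 < δ := by simp [hδdef]; linarith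
  by_contra hcon
  push_neg at hcon
  -- hcon : ∀ k, (k:ℝ) ≤ V 0 / δ → r < ‖e k‖
  have key : ∀ k : ℕ, (k : ℝ) ≤ V 0 / δ + 1 → V k ≤ V 0 - k * δ := by
    intro k
    induction k with
    | zero => intro _; simp
    | succ m ih =>
      intro hm
      push_cast at hm
      have hm' : (m : ℝ) ≤ V 0 / δ := by linarith
      have hre : r < ‖e m‖ := hcon m hm'
      have hsq : r ^ 2 ≤ ‖e m‖ ^ 2 := by
        have := pow_le_pow_left₀ hr.le hre.le 2
        linarith
      have hdec : V (m + 1) ≤ V m - δ := by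
        have := h m
        have : c * r ^ 2 ≤ c * ‖e m‖ ^ 2 :=
          mul_le_mul_of_nonneg_left hsq hc.le
        have hm2 := h m
        simp only [hδdef]
        linarith
      have ihm := ih (by linarith)
      push_cast
      linarith
  set K : ℕ := ⌊V 0 / δ⌋₊ + 1 with hK
  have hKle : (K : ℝ) ≤ V 0 / δ + 1 := by
    rw [hK]
    push_cast
    have := Nat.floor_le (div_nonneg (hV 0) hδ.le)
    linarith
  have hKgt : V 0 / δ < (K : ℝ) := by
    rw [hK]
    push_cast
    exact Nat.lt_floor_add_one _
  have := key K hKle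
  have hVK := hV K
  have : V 0 / δ * δ < (K : ℝ) * δ := by
    exact mul_lt_mul_of_pos_right hKgt hδ
  rw [div_mul_cancel₀ _ hδ.ne'] at this
  linarith
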